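/- Every topological quotient map q : X → Y between kω-spaces is compact-covering: for each compact K ⊆ Y there exists a compact L ⊆ X with K ⊆ q(L). -/

import Mathlib

/-- `K` is a kω-sequence for the topological space `X`: an ascending sequence of
compact subsets covering `X` such that the topology of `X` is final with respect
to the inclusions `K n → X`. -/
def IsKOmegaSeq {X : Type*} [TopologicalSpace X] (K : ℕ → Set X) : Prop :=
  (∀ n, IsCompact (K n)) ∧ Monotone K ∧ (⋃ n, K n) = Set.univ ∧
    ∀ U : Set X, IsOpen U ↔ ∀ n, IsOpen ((Subtype.val ⁻¹' U) : Set (K n))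

/-- A kω-space: a Hausdorff space which is the direct limit of an ascending
sequence of compact subsets. -/
def IsKOmega (X : Type*) [TopologicalSpace X] : Prop :=
  T2Space X ∧ ∃ K : ℕ → Set X, IsKOmegaSeq K

/-- A locally kω space: a Hausdorff space each point of which has an open
neighbourhood which is a kω-space in the induced topology. -/
def IsLocallyKOmega (X : Type*) [TopologicalSpace X] : Prop :=
  T2Space X ∧ ∀ x : X, ∃ U : Set X, IsOpen U ∧ x ∈ U ∧ IsKOmega U

lemma IsKOmegaSeq.isClosed {X : Type*} [TopologicalSpace X] {K : ℕ → Set X}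
    (hK : IsKOmegaSeq K) {C : Set X}
    (h : ∀ n, IsClosed ((Subtype.val ⁻¹' C) : Set (K n))) : IsClosed C := by
  rw [← isOpen_compl_iff, hK.2.2.2]
  intro n
  simpa [Set.preimage_compl] using (h n).isOpen_compl

lemma IsKOmegaSeq.compact_subset {Y : Type*} [TopologicalSpace Y] [T2Space Y]
    {M : ℕ → Set Y} (hM : IsKOmegaSeq M) {S : Set Y} (hS : IsCompact S) :
    ∃ n, S ⊆ M n := by
  by_contra h
  push_neg at h
  choose y hyS hyM using fun n => Set.not_subset.mp (h n)
  have key : ∀ B ⊆ Set.range y, IsClosed B := by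
    intro B hB
    apply hM.isClosed
    intro m
    have hfin : (B ∩ M m).Finite := by
      apply Set.Finite.subset ((Set.finite_Iio m).image y)
      rintro z ⟨hzB, hzM⟩
      obtain ⟨i, rfl⟩ := hB hzB
      refine ⟨i, ?_, rfl⟩
      by_contra hi
      simp only [Set.mem_Iio, not_lt] at hi
      exact hyM i (hM.2.1 hi hzM)
    have heq : (Subtype.val ⁻¹' B : Set (M m)) = Subtype.val ⁻¹' (B ∩ M m) := by
      ext x; simp [x.2]
    rw [heq]
    exact (hfin.preimage (Set.injOn_of_injective Subtype.val_injective)).isClosed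
  have hAS : Set.range y ⊆ S := Set.range_subset_iff.mpr hyS
  have hAcl : IsClosed (Set.range y) := key _ subset_rfl
  have hAcomp : IsCompact (Set.range y) := hS.of_isClosed_subset hAcl hAS
  have hAfin : (Set.range y).Finite := by
    obtain ⟨t, ht⟩ := hAcomp.elim_finite_subcover
      (fun a : Y => ((Set.range y) \ {a})ᶜ)
      (fun a => (key _ Set.diff_subset).isOpen_compl)
      (by intro x hx; exact Set.mem_iUnion.mpr ⟨x, by simp⟩)
    apply Set.Finite.subset t.finite_toSet
    intro x hx
    obtain ⟨a, hat, hxa⟩ := Set.mem_iUnion₂.mp (ht hx)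
    have : x = a := by
      by_contra hne
      exact hxa ⟨hx, hne⟩
    exact this ▸ hat
  have hfib : ∃ v, (y ⁻¹' {v}).Infinite := by
    by_contra hfin
    push_neg at hfin
    have : (Set.univ : Set ℕ).Finite := by
      have hcov : (Set.univ : Set ℕ) ⊆ ⋃ v ∈ Set.range y, y ⁻¹' {v} := by
        intro n _
        exact Set.mem_biUnion (Set.mem_range_self n) rfl
      exact ((hAfin.biUnion fun v _ => hfin v).subset hcov)
    exact Set.infinite_univ this
  obtain ⟨v, hv⟩ := hfib
  have hvuniv : v ∈ ⋃ n, M n := hM.2.2.1 ▸ Set.mem_univ v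
  obtain ⟨n₀, hn₀⟩ := Set.mem_iUnion.mp hvuniv
  obtain ⟨m, hm, hlt⟩ := hv.exists_gt n₀
  have : y m = v := hm
  exact hyM m (hM.2.1 hlt.le (this ▸ hn₀))

/-- Every quotient map between kω-spaces is compact-covering. -/
theorem isQuotientMap_compactCovering
    {X Y : Type*} [TopologicalSpace X] [TopologicalSpace Y]
    (hX : IsKOmega X) (hY : IsKOmega Y)
    {q : X → Y} (hq : Topology.IsQuotientMap q) :
    ∀ K : Set Y, IsCompact K → ∃ L : Set X, IsCompact L ∧ K ⊆ q '' L := by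
  obtain ⟨hT2X, K, hK⟩ := hX
  haveI := hY.1
  intro S hS
  have hMseq : IsKOmegaSeq (fun n => q '' K n) := by
    refine ⟨fun n => (hK.1 n).image hq.continuous,
      fun a b hab => Set.image_mono (hK.2.1 hab), ?_, ?_⟩
    · rw [← Set.image_iUnion, hK.2.2.1, Set.image_univ, hq.surjective.range_eq]
    · intro U
      constructor
      · intro hU n
        exact hU.preimage continuous_subtype_val
      · intro h
        rw [← hq.isOpen_preimage, hK.2.2.2]
        intro n
        have hf : Continuous (fun x : K n =>
            (⟨q x, Set.mem_image_of_mem q x.2⟩ : q '' K n)) :=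
          Continuous.subtype_mk (hq.continuous.comp continuous_subtype_val) _
        exact (h n).preimage hf
  obtain ⟨n, hn⟩ := hMseq.compact_subset hS
  exact ⟨K n, hK.1 n, hn⟩
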